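/- For every finite simple graph G containing no triangle (no subgraph isomorphic to K₃), the cutwidth satisfies cw(G) ≥ δ(G)²/2, where δ(G) is the degeneracy of G. -/

import Mathlib

open Finset

variable {V : Type*}

/-- The number of edges crossing position `i` in the linear ordering `f`. -/
def SimpleGraph.cutAt [Fintype V] [DecidableEq V] (G : SimpleGraph V) [DecidableRel G.Adj]
    (f : V ≃ Fin (Fintype.card V)) (i : Fin (Fintype.card V)) : ℕ :=
  (G.edgeFinset.filter (fun e => ∃ u ∈ e, ∃ v ∈ e, f u ≤ i ∧ i < f v)).card

/-- The cutwidth of a finite simple graph. -/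
noncomputable def SimpleGraph.cutwidth [Fintype V] [DecidableEq V] (G : SimpleGraph V)
    [DecidableRel G.Adj] : ℕ :=
  sInf { m | ∃ f : V ≃ Fin (Fintype.card V), m = Finset.univ.sup (fun i => G.cutAt f i) }

/-- The degeneracy of a finite simple graph. -/
noncomputable def SimpleGraph.degeneracy [Fintype V] [DecidableEq V] (G : SimpleGraph V)
    [DecidableRel G.Adj] : ℕ :=
  sSup { k | ∃ s : Finset V, s.Nonempty ∧ ∀ v ∈ s, k ≤ (s.filter (G.Adj v)).card }

/-- Number of edges of the induced subgraph on `s`. -/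
def SimpleGraph.inducedEdgeCount [Fintype V] [DecidableEq V] (G : SimpleGraph V)
    [DecidableRel G.Adj] (s : Finset V) : ℕ :=
  (G.edgeFinset.filter (fun e => ∀ u ∈ e, u ∈ s)).card

/-- `(ρ, λ)`-uniform sparsity. -/
def SimpleGraph.UniformlySparse [Fintype V] [DecidableEq V] (G : SimpleGraph V)
    [DecidableRel G.Adj] (ρ lam : ℝ) : Prop :=
  ∀ s : Finset V, ρ * (Fintype.card V : ℝ) ≤ (s.card : ℝ) →
    (G.inducedEdgeCount s : ℝ) ≤ (s.card : ℝ) * ((s.card : ℝ) - 1) / (2 * lam)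


/- -- auxiliary lemmas -- -/

lemma exists_threshold {n : ℕ} (t : Finset (Fin n)) (δ : ℕ) (hδ : 1 ≤ δ) (h : δ ≤ t.card) :
    ∃ p : Fin n, p ∈ t ∧ (t.filter (fun q => q ≤ p)).card = δ := by
  have hlt : δ - 1 < t.card := by omega
  set e := t.orderIsoOfFin rfl with he
  set j0 : Fin t.card := ⟨δ - 1, hlt⟩ with hj0
  refine ⟨(e j0 : Fin n), (e j0).2, ?_⟩
  have hinj : Function.Injective (fun j : Fin t.card => (e j : Fin n)) := by
    intro x y hxy
    exact e.injective (Subtype.ext hxy)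
  have himg : t.filter (fun q => q ≤ (e j0 : Fin n))
      = (Finset.Iic j0).image (fun j => (e j : Fin n)) := by
    ext q
    simp only [mem_filter, mem_image, mem_Iic]
    constructor
    · rintro ⟨hq, hle⟩
      refine ⟨e.symm ⟨q, hq⟩, ?_, by simp⟩
      rw [← e.le_iff_le]
      simpa using (Subtype.coe_le_coe (x := (⟨q, hq⟩ : t)) (y := e j0)).1 hle
    · rintro ⟨j, hj, rfl⟩
      refine ⟨(e j).2, ?_⟩
      exact_mod_cast e.monotone hj
  rw [himg, Finset.card_image_of_injective _ hinj, Fin.card_Iic]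
  simp [hj0]; omega


lemma mantel_sum [Fintype V] [DecidableEq V] (G : SimpleGraph V) [DecidableRel G.Adj]
    (htf : G.CliqueFree 3) (L : Finset V) :
    (∑ u ∈ L, ((L.filter (G.Adj u)).card : ℝ)) ≤ (L.card : ℝ) ^ 2 / 2 := by
  set a : V → ℝ := fun u => ((L.filter (G.Adj u)).card : ℝ) with ha
  have hnonneg : ∀ u, 0 ≤ a u := fun u => Nat.cast_nonneg _
  -- step 1: adjacent pairs have disjoint neighborhoods
  have step1 : ∀ u ∈ L, ∀ v ∈ L, G.Adj u v → a u + a v ≤ (L.card : ℝ) := by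
    intro u hu v hv huv
    have hdisj : Disjoint (L.filter (G.Adj u)) (L.filter (G.Adj v)) := by
      rw [Finset.disjoint_left]
      intro w hw1 hw2
      simp only [mem_filter] at hw1 hw2
      exact htf {u, v, w} (SimpleGraph.is3Clique_triple_iff.2 ⟨huv, hw1.2, hw2.2⟩)
    have hcu := Finset.card_union_of_disjoint hdisj
    have hsub : (L.filter (G.Adj u)) ∪ (L.filter (G.Adj v)) ⊆ L := by
      intro w hw; simp only [mem_union, mem_filter] at hw; tauto
    have hcard := Finset.card_le_card hsub
    rw [hcu] at hcard
    simp only [ha]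
    exact_mod_cast hcard
  set S : ℝ := ∑ u ∈ L, a u with hS
  set Q : ℝ := ∑ u ∈ L, (a u) ^ 2 with hQ
  have hQ1 : Q = ∑ u ∈ L, ∑ _v ∈ L.filter (G.Adj u), a u := by
    rw [hQ]; apply Finset.sum_congr rfl; intro u hu
    rw [Finset.sum_const, nsmul_eq_mul, sq]
  have hQ2 : Q = ∑ u ∈ L, ∑ v ∈ L.filter (G.Adj u), a v := by
    rw [hQ]
    have h1 : ∀ u ∈ L, ∑ v ∈ L.filter (G.Adj u), a v
        = ∑ v ∈ L, if G.Adj u v then a v else 0 := fun u _ => Finset.sum_filter _ _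
    rw [Finset.sum_congr rfl h1, Finset.sum_comm]
    apply Finset.sum_congr rfl; intro v hv
    rw [← Finset.sum_filter]
    have hfil : L.filter (fun u => G.Adj u v) = L.filter (G.Adj v) := by
      apply Finset.filter_congr; intro u _; simp [SimpleGraph.adj_comm]
    rw [hfil, Finset.sum_const, nsmul_eq_mul, sq]
  have h2Q : 2 * Q ≤ (L.card : ℝ) * S := by
    have : 2 * Q = ∑ u ∈ L, ∑ v ∈ L.filter (G.Adj u), (a u + a v) := by
      rw [two_mul]; nth_rewrite 1 [hQ1]; nth_rewrite 1 [hQ2]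
      rw [← Finset.sum_add_distrib]
      exact Finset.sum_congr rfl fun u _ => (Finset.sum_add_distrib).symm
    rw [this]
    have hb : ∀ u ∈ L, ∑ v ∈ L.filter (G.Adj u), (a u + a v)
        ≤ ∑ _v ∈ L.filter (G.Adj u), (L.card : ℝ) := by
      intro u hu
      apply Finset.sum_le_sum
      intro v hv
      simp only [mem_filter] at hv
      exact step1 u hu v hv.1 hv.2
    calc ∑ u ∈ L, ∑ v ∈ L.filter (G.Adj u), (a u + a v)
        ≤ ∑ u ∈ L, ∑ _v ∈ L.filter (G.Adj u), (L.card : ℝ) := Finset.sum_le_sum hb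
      _ = (L.card : ℝ) * S := by
          rw [hS, Finset.mul_sum]
          apply Finset.sum_congr rfl; intro u hu
          rw [Finset.sum_const, nsmul_eq_mul, ha]; ring
  have hCS : S ^ 2 ≤ (L.card : ℝ) * Q := by
    have := sq_sum_le_card_mul_sum_sq (s := L) (f := a)
    simpa [hS, hQ] using this
  have hSnn : 0 ≤ S := Finset.sum_nonneg fun u _ => hnonneg u
  nlinarith [sq_nonneg (L.card : ℝ), hSnn, h2Q, hCS]

lemma key_cut [Fintype V] [DecidableEq V] (G : SimpleGraph V) [DecidableRel G.Adj]
    (htf : G.CliqueFree 3) (f : V ≃ Fin (Fintype.card V)) (s : Finset V) (δ : ℕ)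
    (hδ1 : 1 ≤ δ) (hsn : s.Nonempty) (hs : ∀ v ∈ s, δ ≤ (s.filter (G.Adj v)).card)
    (mantel : ∀ L : Finset V,
      (∑ u ∈ L, ((L.filter (G.Adj u)).card : ℝ)) ≤ (L.card : ℝ) ^ 2 / 2)
    (thresh : ∀ (t : Finset (Fin (Fintype.card V))), 1 ≤ δ → δ ≤ t.card →
      ∃ p, p ∈ t ∧ (t.filter (fun q => q ≤ p)).card = δ) :
    ((δ : ℝ)) ^ 2 / 2 ≤ ((univ.sup (G.cutAt f) : ℕ) : ℝ) := by
  obtain ⟨v0, hv0⟩ := hsn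
  have hδs : δ ≤ s.card :=
    le_trans (hs v0 hv0) (Finset.card_le_card (Finset.filter_subset _ _))
  set t : Finset (Fin (Fintype.card V)) := s.image f with ht
  have htc : t.card = s.card := Finset.card_image_of_injective _ f.injective
  obtain ⟨p, hpt, hpcard⟩ := thresh t hδ1 (htc ▸ hδs)
  set L : Finset V := s.filter (fun v => f v ≤ p) with hL
  set R : Finset V := s.filter (fun v => p < f v) with hR
  have hLcard : L.card = δ := by
    have himg : L.image f = t.filter (fun q => q ≤ p) := by
      rw [hL, ht, Finset.filter_image]
    have := Finset.card_image_of_injective L f.injective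
    rw [himg, hpcard] at this
    omega
  -- partition of neighbor counts
  have hpart : ∀ u ∈ L, (L.filter (G.Adj u)).card + (R.filter (G.Adj u)).card
      = (s.filter (G.Adj u)).card := by
    intro u _
    have h1 : L.filter (G.Adj u) = (s.filter (G.Adj u)).filter (fun v => f v ≤ p) := by
      rw [hL, Finset.filter_comm]
    have h2 : R.filter (G.Adj u) = (s.filter (G.Adj u)).filter (fun v => ¬ (f v ≤ p)) := by
      rw [hR, Finset.filter_comm]
      congr 1
      ext v
      simp [not_le]
    rw [h1, h2]
    exact Finset.card_filter_add_card_filter_not _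
  -- the crossing edge set
  set T : Finset (Sym2 V) :=
    L.biUnion (fun u => (R.filter (G.Adj u)).image (fun w => s(u, w))) with hT
  have hTcard : T.card = ∑ u ∈ L, (R.filter (G.Adj u)).card := by
    rw [hT, Finset.card_biUnion]
    · exact Finset.sum_congr rfl fun u _ =>
        Finset.card_image_of_injective _ fun w w' hww' => Sym2.congr_right.1 hww'
    · intro u hu u' hu' huu'
      rw [Function.onFun_apply, Finset.disjoint_left]
      rintro e he he'
      simp only [Finset.mem_image, Finset.mem_filter] at he he'
      obtain ⟨w, ⟨hwR, -⟩, rfl⟩ := he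
      obtain ⟨w', ⟨hw'R, -⟩, heq⟩ := he'
      rw [Sym2.eq_iff] at heq
      simp only [hL, hR, Finset.mem_coe, Finset.mem_filter] at hu hu' hwR hw'R
      rcases heq with ⟨h1, -⟩ | ⟨h1, h2⟩
      · exact huu' h1.symm
      · rw [h2] at hw'R
        exact absurd hu.2 (not_le.2 hw'R.2)
  have hTsub : T ⊆ G.edgeFinset.filter (fun e => ∃ u ∈ e, ∃ v ∈ e, f u ≤ p ∧ p < f v) := by
    intro e he
    simp only [hT, Finset.mem_biUnion, Finset.mem_image, Finset.mem_filter] at he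
    obtain ⟨u, hu, w, ⟨hwR, hadj⟩, rfl⟩ := he
    simp only [hL, hR, Finset.mem_filter] at hu hwR
    refine Finset.mem_filter.2 ⟨SimpleGraph.mem_edgeFinset.2 hadj, u, ?_, w, ?_, hu.2, hwR.2⟩
    · exact Sym2.mem_mk_left u w
    · exact Sym2.mem_mk_right u w
  have hcut : T.card ≤ G.cutAt f p := Finset.card_le_card hTsub
  -- lower bound the sum
  have hsum : (δ : ℝ) ^ 2 / 2 ≤ (T.card : ℝ) := by
    have h1 : ∀ u ∈ L, (δ : ℝ) - ((L.filter (G.Adj u)).card : ℝ)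
        ≤ ((R.filter (G.Adj u)).card : ℝ) := by
      intro u hu
      have hu' : u ∈ s := (Finset.mem_filter.1 hu).1
      have := hpart u hu
      have hge := hs u hu'
      have : δ ≤ (L.filter (G.Adj u)).card + (R.filter (G.Adj u)).card := this ▸ hge
      have := (Nat.cast_le (α := ℝ)).2 this
      push_cast at this ⊢
      linarith
    have hman := mantel L
    rw [hLcard] at hman
    have h2 : ∑ u ∈ L, ((δ : ℝ) - ((L.filter (G.Adj u)).card : ℝ))
        ≤ ∑ u ∈ L, ((R.filter (G.Adj u)).card : ℝ) := Finset.sum_le_sum h1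
    rw [Finset.sum_sub_distrib, Finset.sum_const, hLcard, nsmul_eq_mul] at h2
    have h3 : (T.card : ℝ) = ∑ u ∈ L, ((R.filter (G.Adj u)).card : ℝ) := by
      rw [hTcard]; push_cast; ring
    rw [h3]
    nlinarith
  have hsup : G.cutAt f p ≤ univ.sup (G.cutAt f) := Finset.le_sup (Finset.mem_univ p)
  have h4 : (G.cutAt f p : ℝ) ≤ ((univ.sup (G.cutAt f) : ℕ) : ℝ) := Nat.cast_le.2 hsup
  have h5 : (T.card : ℝ) ≤ ((univ.sup (G.cutAt f) : ℕ) : ℝ) :=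
    le_trans (Nat.cast_le.2 hcut) h4
  linarith

/-- **Corollary.** For every triangle-free finite simple graph `G`, `cw(G) ≥ δ(G)²/2`. -/
theorem cutwidth_ge_of_triangleFree [Fintype V] [DecidableEq V]
    (G : SimpleGraph V) [DecidableRel G.Adj] (htf : G.CliqueFree 3) :
    (G.cutwidth : ℝ) ≥ (G.degeneracy : ℝ) ^ 2 / 2 := by
  have hmem : G.cutwidth ∈ { m | ∃ f : V ≃ Fin (Fintype.card V),
      m = Finset.univ.sup (fun i => G.cutAt f i) } :=
    Nat.sInf_mem ⟨_, Fintype.equivFin V, rfl⟩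
  obtain ⟨f, hf⟩ := hmem
  by_cases hd : G.degeneracy = 0
  · rw [hd]
    norm_num
  · set δ := G.degeneracy with hδdef
    have hδ1 : 1 ≤ δ := Nat.one_le_iff_ne_zero.2 hd
    set Sd := { k | ∃ s : Finset V, s.Nonempty ∧ ∀ v ∈ s, k ≤ (s.filter (G.Adj v)).card }
      with hSd
    have hbdd : BddAbove Sd := by
      refine ⟨Fintype.card V, ?_⟩
      rintro k ⟨s, ⟨v, hv⟩, hks⟩
      calc k ≤ (s.filter (G.Adj v)).card := hks v hv
        _ ≤ s.card := Finset.card_le_card (Finset.filter_subset _ _)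
        _ ≤ Fintype.card V := Finset.card_le_card (Finset.subset_univ _)
    have hne : Sd.Nonempty := by
      by_contra hcon
      rw [Set.not_nonempty_iff_eq_empty] at hcon
      have : δ = 0 := by
        rw [hδdef]
        unfold SimpleGraph.degeneracy
        rw [← hSd, hcon, csSup_empty]
        rfl
      exact hd this
    have hdmem : δ ∈ Sd := Nat.sSup_mem hne hbdd
    obtain ⟨s, hsn, hs⟩ := hdmem
    have := key_cut G htf f s δ hδ1 hsn hs (fun L => mantel_sum G htf L)
      (fun t h1 h2 => exists_threshold t δ h1 h2)
    rw [ge_iff_le, hf]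
    exact this
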